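/- Let k ≥ 2 and let m = (m_A : A ⊆ {1,…,k}, |A| = 2) be a tuple of positive integers satisfying the consistency condition. For S ⊆ {1,…,k} with |S| ≥ 2, set m_S := gcd{m_{{i,j}} : i, j ∈ S, i ≠ j}. Then lcm{m_A : A ⊆ {1,…,k}, |A| = 2} · ∏_{i odd, 3 ≤ i ≤ k} ∏_{B ⊆ {1,…,k}, |B| = i} m_B^(i−1) = ∏_{j even, 2 ≤ j ≤ k} ∏_{C ⊆ {1,…,k}, |C| = j} m_C^(j−1). -/

import Mathlib

open Finset

lemma alt2 (u : ℕ) : ∑ n ∈ range (u+1), (-1:ℤ)^n * n * (u.choose n) = if u = 1 then -1 else 0 := by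
  cases u with
  | zero => simp
  | succ m =>
    rw [Finset.sum_range_succ']
    have h1 : ∀ k ∈ range (m+1), (-1:ℤ)^(k+1) * ((k+1 : ℕ) : ℤ) * ((m+1).choose (k+1))
        = (-((m:ℤ)+1)) * ((-1:ℤ)^k * (m.choose k)) := by
      intro k _
      have h2n : (k+1) * ((m+1).choose (k+1)) = (m+1) * (m.choose k) := by
        have h := Nat.add_one_mul_choose_eq m k
        rw [h, mul_comm]
      have h2 : ((k:ℤ)+1) * ((m+1).choose (k+1)) = ((m:ℤ)+1) * (m.choose k) := by
        exact_mod_cast h2n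
      rw [pow_succ]
      push_cast
      linear_combination (-(-1:ℤ)^k) * h2
    rw [Finset.sum_congr rfl h1, ← Finset.mul_sum, Int.alternating_sum_range_choose]
    rcases Nat.eq_zero_or_pos m with h | h
    · subst h; norm_num
    · have h0 : m ≠ 0 := h.ne'
      have h1 : m + 1 ≠ 1 := by omega
      simp [h0, h1]


lemma alt3 (u : ℕ) : ∑ n ∈ range (u+1), (-1:ℤ)^n * ((n:ℤ)-1) * (u.choose n)
    = (if u = 1 then -1 else 0) - (if u = 0 then 1 else 0) := by
  have h : ∀ n ∈ range (u+1), (-1:ℤ)^n * ((n:ℤ)-1) * (u.choose n)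
      = (-1:ℤ)^n * n * (u.choose n) - (-1:ℤ)^n * (u.choose n) := by
    intro n _; ring
  rw [Finset.sum_congr rfl h, Finset.sum_sub_distrib, alt2, Int.alternating_sum_range_choose]

lemma alt4 (u : ℕ) : ∑ n ∈ (range (u+1)).filter (fun n => 2 ≤ n), (-1:ℤ)^n * ((n:ℤ)-1) * (u.choose n)
    = if 2 ≤ u then 1 else 0 := by
  match u with
  | 0 => decide
  | 1 => decide
  | (m+2) =>
    have hsplit := Finset.sum_filter_add_sum_filter_not (range (m+2+1)) (fun n => 2 ≤ n)
      (fun n => (-1:ℤ)^n * ((n:ℤ)-1) * ((m+2).choose n))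
    have hne : (range (m+2+1)).filter (fun n => ¬ 2 ≤ n) = {0, 1} := by
      ext n; simp; omega
    have hval : ∑ n ∈ (range (m+2+1)).filter (fun n => ¬ 2 ≤ n),
        (-1:ℤ)^n * ((n:ℤ)-1) * ((m+2).choose n) = -1 := by
      rw [hne]; simp
    have h3 := alt3 (m+2)
    have h1 : m + 2 ≠ 1 := by omega
    have h0 : m + 2 ≠ 0 := by omega
    rw [if_neg h1, if_neg h0] at h3
    rw [if_pos (by omega : 2 ≤ m+2)]
    linarith [hsplit, hval, h3]


lemma binom_key (u : ℕ) :
    (if 2 ≤ u then 1 else 0) + ∑ n ∈ (range (u+1)).filter (fun n => n % 2 = 1 ∧ 3 ≤ n), (n-1) * u.choose n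
    = ∑ n ∈ (range (u+1)).filter (fun n => n % 2 = 0 ∧ 2 ≤ n), (n-1) * u.choose n := by
  have hsplit := Finset.sum_filter_add_sum_filter_not ((range (u+1)).filter (fun n => 2 ≤ n))
    (fun n => n % 2 = 0) (fun n => (-1:ℤ)^n * ((n:ℤ)-1) * (u.choose n))
  have he : ((range (u+1)).filter (fun n => 2 ≤ n)).filter (fun n => n % 2 = 0)
      = (range (u+1)).filter (fun n => n % 2 = 0 ∧ 2 ≤ n) := by
    ext n; simp; omega
  have ho : ((range (u+1)).filter (fun n => 2 ≤ n)).filter (fun n => ¬ n % 2 = 0)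
      = (range (u+1)).filter (fun n => n % 2 = 1 ∧ 3 ≤ n) := by
    ext n; simp; omega
  rw [he, ho, alt4] at hsplit
  have he2 : ∑ n ∈ (range (u+1)).filter (fun n => n % 2 = 0 ∧ 2 ≤ n),
      (-1:ℤ)^n * ((n:ℤ)-1) * (u.choose n)
      = ∑ n ∈ (range (u+1)).filter (fun n => n % 2 = 0 ∧ 2 ≤ n), (((n-1) * u.choose n : ℕ) : ℤ) := by
    apply Finset.sum_congr rfl
    intro n hn
    simp only [mem_filter, mem_range] at hn
    have hev : Even n := Nat.even_iff.mpr hn.2.1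
    rw [hev.neg_one_pow]
    push_cast [Nat.cast_sub (by omega : 1 ≤ n)]
    ring
  have ho2 : ∑ n ∈ (range (u+1)).filter (fun n => n % 2 = 1 ∧ 3 ≤ n),
      (-1:ℤ)^n * ((n:ℤ)-1) * (u.choose n)
      = - ∑ n ∈ (range (u+1)).filter (fun n => n % 2 = 1 ∧ 3 ≤ n), (((n-1) * u.choose n : ℕ) : ℤ) := by
    rw [← Finset.sum_neg_distrib]
    apply Finset.sum_congr rfl
    intro n hn
    simp only [mem_filter, mem_range] at hn
    have hod : Odd n := Nat.odd_iff.mpr hn.2.1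
    rw [hod.neg_one_pow]
    push_cast [Nat.cast_sub (by omega : 1 ≤ n)]
    ring
  rw [he2, ho2] at hsplit
  have := hsplit
  push_cast at this ⊢
  -- goal over ℕ cast; use Int cast injectivity
  have goalZ : (if 2 ≤ u then (1:ℤ) else 0) + ∑ n ∈ (range (u+1)).filter (fun n => n % 2 = 1 ∧ 3 ≤ n), (((n-1) * u.choose n : ℕ) : ℤ)
      = ∑ n ∈ (range (u+1)).filter (fun n => n % 2 = 0 ∧ 2 ≤ n), (((n-1) * u.choose n : ℕ) : ℤ) := by
    linarith [hsplit]
  exact_mod_cast goalZ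


lemma sum_ind (N a : ℕ) (h : a ≤ N) : ∑ t ∈ range N, (if t < a then 1 else 0) = a := by
  rw [Finset.sum_boole]
  have : (range N).filter (fun t => t < a) = range a := by
    ext t; simp [Finset.mem_range]; omega
  rw [this, Finset.card_range]; simp

lemma count_lemma {ι : Type*} [DecidableEq ι] (U : Finset ι) (Q : ℕ → Prop) [DecidablePred Q] :
    ∑ S ∈ U.powerset.filter (fun S => Q S.card), (S.card - 1)
    = ∑ n ∈ (range (U.card+1)).filter Q, (n-1) * U.card.choose n := by
  rw [Finset.sum_filter, Finset.sum_powerset, Finset.sum_filter]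
  apply Finset.sum_congr rfl
  intro j hj
  have hinner : ∀ S ∈ powersetCard j U, (if Q S.card then S.card - 1 else 0)
      = (if Q j then j - 1 else 0) := by
    intro S hS
    rw [(Finset.mem_powersetCard.mp hS).2]
  rw [Finset.sum_congr rfl hinner, Finset.sum_const, Finset.card_powersetCard, smul_eq_mul]
  split <;> simp [mul_comm]


lemma fact_gcd' {ι : Type*} [DecidableEq ι] (p : ℕ) (f : ι → ℕ) {s : Finset ι} (hs : s.Nonempty)
    (hf : ∀ i ∈ s, f i ≠ 0) :
    (s.gcd f).factorization p = s.inf' hs (fun i => (f i).factorization p) := by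
  induction hs using Finset.Nonempty.cons_induction with
  | singleton a => simp
  | cons a s h hs ih =>
    have hf' : ∀ i ∈ s, f i ≠ 0 := fun i hi => hf i (by simp [hi])
    have hgcd0 : s.gcd f ≠ 0 := by
      rw [Ne, Finset.gcd_eq_zero_iff]
      obtain ⟨i, hi⟩ := hs
      exact fun h' => hf' i hi (h' i hi)
    have hL : ((cons a s h).gcd f) = Nat.gcd (f a) (s.gcd f) := by
      rw [Finset.cons_eq_insert, Finset.gcd_insert]; rfl
    rw [hL, Finset.inf'_cons hs, Nat.factorization_gcd (hf a (by simp)) hgcd0, Finsupp.inf_apply, ih hf']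

lemma fact_lcm' {ι : Type*} [DecidableEq ι] (p : ℕ) (f : ι → ℕ) {s : Finset ι} (hs : s.Nonempty)
    (hf : ∀ i ∈ s, f i ≠ 0) :
    (s.lcm f).factorization p = s.sup' hs (fun i => (f i).factorization p) := by
  induction hs using Finset.Nonempty.cons_induction with
  | singleton a => simp
  | cons a s h hs ih =>
    have hf' : ∀ i ∈ s, f i ≠ 0 := fun i hi => hf i (by simp [hi])
    have hlcm0 : s.lcm f ≠ 0 := by
      rw [Ne, Finset.lcm_eq_zero_iff]
      rintro ⟨i, hi, hi0⟩
      exact hf' i hi hi0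
    have hL : ((cons a s h).lcm f) = Nat.lcm (f a) (s.lcm f) := by
      rw [Finset.cons_eq_insert, Finset.lcm_insert]; rfl
    rw [hL, Finset.sup'_cons hs, Nat.factorization_lcm (hf a (by simp)) hlcm0, Finsupp.sup_apply, ih hf']


set_option maxHeartbeats 1000000 in
lemma core {k : ℕ} (x : Fin k → ℕ) (L' : ℕ) (F' : Finset (Fin k) → ℕ)
    (hL : ∀ t, t < L' ↔ 2 ≤ (univ.filter fun i => t < x i).card)
    (hF : ∀ S : Finset (Fin k), 2 ≤ S.card → ∀ t,
      (t < F' S ↔ S ⊆ univ.filter fun i => t < x i)) :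
    L' + ∑ S ∈ univ.filter (fun S : Finset (Fin k) => S.card % 2 = 1 ∧ 3 ≤ S.card),
        (S.card - 1) * F' S
    = ∑ S ∈ univ.filter (fun S : Finset (Fin k) => S.card % 2 = 0 ∧ 2 ≤ S.card),
        (S.card - 1) * F' S := by
  classical
  set N : ℕ := (univ : Finset (Fin k)).sup x + 1 with hN
  have hxN : ∀ i : Fin k, x i < N := by
    intro i
    have := Finset.le_sup (f := x) (mem_univ i)
    omega
  have hLN : L' ≤ N := by
    by_contra h
    have h2 := (hL N).mp (by omega)
    have : (univ.filter fun i => N < x i) = ∅ := by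
      apply Finset.filter_false_of_mem
      intro i _
      have := hxN i
      omega
    rw [this] at h2
    simp at h2
  have hFN : ∀ S : Finset (Fin k), 2 ≤ S.card → F' S ≤ N := by
    intro S hS
    by_contra h
    have h2 := (hF S hS N).mp (by omega)
    obtain ⟨i, hi⟩ := Finset.card_pos.mp (by omega : 0 < S.card)
    have := h2 hi
    simp only [mem_filter] at this
    have := hxN i
    omega
  -- expand everything as sums over t
  have expand : ∀ (P : Finset (Fin k) → Prop) (_ : DecidablePred P)
      (hP : ∀ S, P S → 2 ≤ S.card),
      ∑ S ∈ univ.filter P, (S.card - 1) * F' S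
      = ∑ t ∈ range N, ∑ S ∈ univ.filter P, (S.card - 1) * (if t < F' S then 1 else 0) := by
    intro P _ hP
    rw [Finset.sum_comm]
    apply Finset.sum_congr rfl
    intro S hS
    rw [← Finset.mul_sum, sum_ind N (F' S) (hFN S (hP S (mem_filter.mp hS).2))]
  rw [expand _ _ (fun S h => by omega), expand _ _ (fun S h => h.2),
    ← sum_ind N L' hLN, ← Finset.sum_add_distrib]
  apply Finset.sum_congr rfl
  intro t ht
  set U : Finset (Fin k) := univ.filter (fun i => t < x i) with hU
  have h1 : (if t < L' then 1 else 0) = (if 2 ≤ U.card then 1 else 0) := by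
    simp only [hL t, hU]
  have h2 : ∀ (Q : ℕ → Prop) (_ : DecidablePred Q) (hQ : ∀ n, Q n → 2 ≤ n),
      ∑ S ∈ univ.filter (fun S : Finset (Fin k) => Q S.card),
        (S.card - 1) * (if t < F' S then 1 else 0)
      = ∑ n ∈ (range (U.card+1)).filter Q, (n-1) * U.card.choose n := by
    intro Q _ hQ
    rw [← count_lemma U Q]
    have hterm : ∀ S ∈ univ.filter (fun S : Finset (Fin k) => Q S.card),
        (S.card - 1) * (if t < F' S then 1 else 0)
        = (if S ∈ U.powerset then S.card - 1 else 0) := by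
      intro S hS
      simp only [mem_filter] at hS
      simp only [hF S (hQ _ hS.2) t, Finset.mem_powerset]
      split <;> simp
    rw [Finset.sum_congr rfl hterm, Finset.sum_ite_mem]
    apply Finset.sum_congr _ (fun _ _ => rfl)
    ext S
    simp only [mem_inter, mem_filter, mem_powerset, mem_univ, true_and]
    tauto
  have e1 : ∑ S ∈ univ.filter (fun S : Finset (Fin k) => S.card % 2 = 1 ∧ 3 ≤ S.card),
      (S.card - 1) * (if t < F' S then 1 else 0)
      = ∑ n ∈ (range (U.card+1)).filter (fun n => n % 2 = 1 ∧ 3 ≤ n), (n-1) * U.card.choose n :=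
    h2 (fun n => n % 2 = 1 ∧ 3 ≤ n) (by infer_instance) (fun n h => by omega)
  have e2 : ∑ S ∈ univ.filter (fun S : Finset (Fin k) => S.card % 2 = 0 ∧ 2 ≤ S.card),
      (S.card - 1) * (if t < F' S then 1 else 0)
      = ∑ n ∈ (range (U.card+1)).filter (fun n => n % 2 = 0 ∧ 2 ≤ n), (n-1) * U.card.choose n :=
    h2 (fun n => n % 2 = 0 ∧ 2 ≤ n) (by infer_instance) (fun n h => h.2)
  rw [h1, e1, e2]
  exact binom_key U.card


lemma bridge (k : ℕ) (hk : 2 ≤ k) (m : Finset (Fin k) → ℕ)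
    (hpos : ∀ A : Finset (Fin k), A.card = 2 → 0 < m A)
    (hcons : ∀ A₁ B₁ A₂ B₂ : Finset (Fin k),
      A₁.card = 2 → B₁.card = 2 → A₂.card = 2 → B₂.card = 2 →
      A₁ ∪ B₁ = A₂ ∪ B₂ → Nat.gcd (m A₁) (m B₁) = Nat.gcd (m A₂) (m B₂))
    (p : ℕ) :
    ∃ x : Fin k → ℕ,
      (∀ t, (t < ((univ.filter (fun A : Finset (Fin k) => A.card = 2)).lcm m).factorization p
        ↔ 2 ≤ (univ.filter fun i => t < x i).card)) ∧
      (∀ S : Finset (Fin k), 2 ≤ S.card → ∀ t,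
        (t < ((S.powerset.filter (fun A => A.card = 2)).gcd m).factorization p
          ↔ S ⊆ univ.filter fun i => t < x i)) := by
  classical
  have hm0 : ∀ A : Finset (Fin k), A.card = 2 → m A ≠ 0 := fun A h => (hpos A h).ne'
  set E : Finset (Fin k) → ℕ := fun A => (m A).factorization p with hE
  have hone : ∀ i : Fin k, ((univ : Finset (Fin k)).erase i).Nonempty := by
    intro i
    rw [← Finset.card_pos, Finset.card_erase_of_mem (mem_univ i), Finset.card_univ,
      Fintype.card_fin]
    omega
  set x : Fin k → ℕ := fun i => ((univ.erase i)).sup' (hone i) (fun j => E {i, j}) with hx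
  have hmin : ∀ A₁ B₁ A₂ B₂ : Finset (Fin k),
      A₁.card = 2 → B₁.card = 2 → A₂.card = 2 → B₂.card = 2 →
      A₁ ∪ B₁ = A₂ ∪ B₂ → min (E A₁) (E B₁) = min (E A₂) (E B₂) := by
    intro A₁ B₁ A₂ B₂ h1 h2 h3 h4 hu
    have hg := hcons A₁ B₁ A₂ B₂ h1 h2 h3 h4 hu
    have e1 : min (E A₁) (E B₁) = (Nat.gcd (m A₁) (m B₁)).factorization p := by
      rw [Nat.factorization_gcd (hm0 _ h1) (hm0 _ h2), Finsupp.inf_apply]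
    have e2 : min (E A₂) (E B₂) = (Nat.gcd (m A₂) (m B₂)).factorization p := by
      rw [Nat.factorization_gcd (hm0 _ h3) (hm0 _ h4), Finsupp.inf_apply]
    rw [e1, e2, hg]
  have hEsymm : ∀ i j : Fin k, E {i, j} = E {j, i} := by
    intro i j; rw [Finset.pair_comm]
  have hxle : ∀ i j : Fin k, j ≠ i → E {i, j} ≤ x i := by
    intro i j hij
    exact Finset.le_sup' (fun j => E {i, j}) (by simp [hij])
  have struct : ∀ i j : Fin k, i ≠ j → E {i, j} = min (x i) (x j) := by
    intro i j hij
    apply le_antisymm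
    · apply le_min (hxle i j (Ne.symm hij))
      rw [hEsymm]
      exact hxle j i hij
    · obtain ⟨a, ha, hxa⟩ := Finset.exists_mem_eq_sup' (hone i) (fun l => E {i, l})
      obtain ⟨b, hb, hxb⟩ := Finset.exists_mem_eq_sup' (hone j) (fun l => E {j, l})
      have hai : a ≠ i := (Finset.mem_erase.mp ha).1
      have hbj : b ≠ j := (Finset.mem_erase.mp hb).1
      have hxa' : x i = E {i, a} := hxa
      have hxb' : x j = E {j, b} := hxb
      rw [hxa', hxb']
      by_cases haj : a = j
      · subst haj; exact min_le_left _ _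
      by_cases hbi : b = i
      · rw [hbi, hEsymm j i]
        exact min_le_right _ _
      by_cases hab : a = b
      · subst hab
        have h := hmin {i, a} {j, a} {i, j} {j, a}
          (Finset.card_pair (Ne.symm hai)) (Finset.card_pair (Ne.symm haj))
          (Finset.card_pair hij) (Finset.card_pair (Ne.symm haj))
          (by ext y; simp; tauto)
        exact le_trans (le_of_eq h) (min_le_left _ _)
      · have h := hmin {i, a} {j, b} {i, j} {a, b}
          (Finset.card_pair (Ne.symm hai)) (Finset.card_pair (Ne.symm hbj))
          (Finset.card_pair hij) (Finset.card_pair hab)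
          (by ext y; simp; tauto)
        exact le_trans (le_of_eq h) (min_le_left _ _)
  -- pairs
  set pairs : Finset (Finset (Fin k)) := univ.filter (fun A : Finset (Fin k) => A.card = 2)
    with hpairs
  have hpne : pairs.Nonempty := by
    have hne01 : (⟨0, by omega⟩ : Fin k) ≠ ⟨1, by omega⟩ := by simp [Fin.ext_iff]
    exact ⟨{⟨0, by omega⟩, ⟨1, by omega⟩}, by simp [hpairs, Finset.card_pair hne01]⟩
  have hpm0 : ∀ A ∈ pairs, m A ≠ 0 := by
    intro A hA
    exact hm0 A (mem_filter.mp hA).2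
  refine ⟨x, ?_, ?_⟩
  · intro t
    rw [fact_lcm' p m hpne hpm0, Finset.lt_sup'_iff]
    constructor
    · rintro ⟨A, hA, hlt⟩
      obtain ⟨i, j, hij, rfl⟩ := Finset.card_eq_two.mp (mem_filter.mp hA).2
      rw [show (m {i,j}).factorization p = E {i,j} from rfl, struct i j hij] at hlt
      have h1 : t < x i := lt_of_lt_of_le hlt (min_le_left _ _)
      have h2 : t < x j := lt_of_lt_of_le hlt (min_le_right _ _)
      have hsub : ({i, j} : Finset (Fin k)) ⊆ univ.filter fun i => t < x i := by
        intro y hy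
        simp only [mem_insert, mem_singleton] at hy
        rcases hy with rfl | rfl <;> simp [mem_filter, h1, h2]
      calc 2 = ({i, j} : Finset (Fin k)).card := (Finset.card_pair hij).symm
        _ ≤ _ := Finset.card_le_card hsub
    · intro h2
      obtain ⟨i, hi, j, hj, hij⟩ := Finset.one_lt_card.mp
        (by omega : 1 < (univ.filter fun i => t < x i).card)
      simp only [mem_filter, mem_univ, true_and] at hi hj
      refine ⟨{i, j}, by simp [hpairs, Finset.card_pair hij], ?_⟩
      rw [show (m {i,j}).factorization p = E {i,j} from rfl, struct i j hij]
      exact lt_min hi hj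
  · intro S hS t
    set PS : Finset (Finset (Fin k)) := S.powerset.filter (fun A => A.card = 2) with hPS
    have hPSne : PS.Nonempty := by
      obtain ⟨i, hi, j, hj, hij⟩ := Finset.one_lt_card.mp (by omega : 1 < S.card)
      refine ⟨{i, j}, ?_⟩
      simp only [hPS, mem_filter, Finset.mem_powerset]
      exact ⟨Finset.insert_subset hi (Finset.singleton_subset_iff.mpr hj),
        Finset.card_pair hij⟩
    have hPSm0 : ∀ A ∈ PS, m A ≠ 0 := fun A hA => hm0 A (mem_filter.mp hA).2
    rw [fact_gcd' p m hPSne hPSm0, Finset.lt_inf'_iff]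
    constructor
    · intro hall i hi
      obtain ⟨j, hj, hji⟩ := Finset.exists_mem_ne (by omega : 1 < S.card) i
      have hmem : ({i, j} : Finset (Fin k)) ∈ PS := by
        simp only [hPS, mem_filter, Finset.mem_powerset]
        exact ⟨Finset.insert_subset hi (Finset.singleton_subset_iff.mpr hj),
          Finset.card_pair (Ne.symm hji)⟩
      have := hall _ hmem
      rw [show (m {i,j}).factorization p = E {i,j} from rfl,
        struct i j (Ne.symm hji)] at this
      simp only [mem_filter, mem_univ, true_and]
      exact lt_of_lt_of_le this (min_le_left _ _)
    · intro hsub A hA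
      simp only [hPS, mem_filter, Finset.mem_powerset] at hA
      obtain ⟨i, j, hij, rfl⟩ := Finset.card_eq_two.mp hA.2
      have hi' : t < x i := by
        have := hsub (hA.1 (show i ∈ ({i,j} : Finset (Fin k)) by simp))
        simpa using this
      have hj' : t < x j := by
        have := hsub (hA.1 (show j ∈ ({i,j} : Finset (Fin k)) by simp))
        simpa using this
      rw [show (m {i,j}).factorization p = E {i,j} from rfl, struct i j hij]
      exact lt_min (by simpa using hi') (by simpa using hj')

theorem lcm_identity_for_consistent_tuples (k : ℕ) (hk : 2 ≤ k)
    (m : Finset (Fin k) → ℕ)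
    (hpos : ∀ A : Finset (Fin k), A.card = 2 → 0 < m A)
    (hcons : ∀ A₁ B₁ A₂ B₂ : Finset (Fin k),
      A₁.card = 2 → B₁.card = 2 → A₂.card = 2 → B₂.card = 2 →
      A₁ ∪ B₁ = A₂ ∪ B₂ → Nat.gcd (m A₁) (m B₁) = Nat.gcd (m A₂) (m B₂))
    (mS : Finset (Fin k) → ℕ)
    (hmS : ∀ S : Finset (Fin k),
      mS S = (S.powerset.filter (fun A => A.card = 2)).gcd m) :
    ((Finset.univ.filter (fun A : Finset (Fin k) => A.card = 2)).lcm m) *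
      ∏ B ∈ Finset.univ.filter
        (fun B : Finset (Fin k) => B.card % 2 = 1 ∧ 3 ≤ B.card),
          mS B ^ (B.card - 1) =
    ∏ C ∈ Finset.univ.filter
        (fun C : Finset (Fin k) => C.card % 2 = 0 ∧ 2 ≤ C.card),
          mS C ^ (C.card - 1) := by
  classical
  have hm0 : ∀ A : Finset (Fin k), A.card = 2 → m A ≠ 0 := fun A h => (hpos A h).ne'
  have hmS0 : ∀ S : Finset (Fin k), 2 ≤ S.card → mS S ≠ 0 := by
    intro S hS h0
    rw [hmS S, Finset.gcd_eq_zero_iff] at h0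
    obtain ⟨i, hi, j, hj, hij⟩ := Finset.one_lt_card.mp (by omega : 1 < S.card)
    have hmem : ({i, j} : Finset (Fin k)) ∈ S.powerset.filter (fun A => A.card = 2) := by
      simp only [mem_filter, Finset.mem_powerset]
      exact ⟨Finset.insert_subset hi (Finset.singleton_subset_iff.mpr hj),
        Finset.card_pair hij⟩
    exact hm0 _ (Finset.card_pair hij) (h0 _ hmem)
  have hL0 : ((Finset.univ.filter (fun A : Finset (Fin k) => A.card = 2)).lcm m) ≠ 0 := by
    rw [Ne, Finset.lcm_eq_zero_iff]
    rintro ⟨A, hA, h0⟩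
    simp only [Finset.mem_coe, mem_filter] at hA
    exact hm0 A hA.2 h0
  have hoddt : ∀ B ∈ Finset.univ.filter
      (fun B : Finset (Fin k) => B.card % 2 = 1 ∧ 3 ≤ B.card), mS B ^ (B.card - 1) ≠ 0 := by
    intro B hB
    have h2 := (mem_filter.mp hB).2
    exact pow_ne_zero _ (hmS0 B (by omega))
  have hevent : ∀ C ∈ Finset.univ.filter
      (fun C : Finset (Fin k) => C.card % 2 = 0 ∧ 2 ≤ C.card), mS C ^ (C.card - 1) ≠ 0 := by
    intro C hC
    have h2 := (mem_filter.mp hC).2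
    exact pow_ne_zero _ (hmS0 C h2.2)
  have hodd0 : ∏ B ∈ Finset.univ.filter
      (fun B : Finset (Fin k) => B.card % 2 = 1 ∧ 3 ≤ B.card), mS B ^ (B.card - 1) ≠ 0 :=
    Finset.prod_ne_zero_iff.mpr hoddt
  have heven0 : ∏ C ∈ Finset.univ.filter
      (fun C : Finset (Fin k) => C.card % 2 = 0 ∧ 2 ≤ C.card), mS C ^ (C.card - 1) ≠ 0 :=
    Finset.prod_ne_zero_iff.mpr hevent
  apply Nat.factorization_inj (mul_ne_zero hL0 hodd0) heven0
  rw [Nat.factorization_mul hL0 hodd0, Nat.factorization_prod hoddt,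
    Nat.factorization_prod hevent]
  ext p
  simp only [Finsupp.add_apply, Finset.sum_apply', Nat.factorization_pow, Finsupp.smul_apply,
    smul_eq_mul]
  obtain ⟨x, hLx, hFx⟩ := bridge k hk m hpos hcons p
  have hF' : ∀ S : Finset (Fin k), 2 ≤ S.card → ∀ t,
      (t < (mS S).factorization p ↔ S ⊆ univ.filter fun i => t < x i) := by
    intro S h t
    rw [hmS S]
    exact hFx S h t
  exact core x _ (fun S => (mS S).factorization p) hLx hF'
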